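/- Suppose an $F$-linear map $K:V_{l,x}\to V^*_{l,x^{-1}}$ satisfies $K\circ a=a\circ K$ where $a$ ranges over $e_i,f_i,k_i^{\pm1}$ for every $i\in I_\bullet$ (on the left $a$ acts on $V_{l,x}$ with parameter $x$, on the right on $V^*_{l,x^{-1}}$ with parameter $x^{-1}$). Then there exist scalars $c_\alpha\in F$ ($\alpha\in B_l$) such that $Kv_\alpha=c_\alpha\,v^*_{\sigma^{(\varepsilon)}(\alpha)}$ for every $\alpha\in B_l$, and $c_\alpha = x^{2\delta_{i,0}}\,c_{\alpha+\mathbf{e}_i-\mathbf{e}_{i+1}}$ for every $i\in I_\bullet$ and every $\alpha\in B_l$ with $\alpha+\mathbf{e}_i-\mathbf{e}_{i+1}\in B_l$. -/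

import Mathlib

/- Common setup: the quantum affine algebra U_q(A^{(1)}_{2n-1}) acting on symmetric
tensor representations V_{l,x} and their duals, coideal operators b_i, tensor products,
and the K matrix, following Kusano-Okado. -/

noncomputable section
namespace AII

open scoped TensorProduct Classical
open Finset

/-- The base field F = ℚ(q). -/
abbrev F : Type := RatFunc ℚ

/-- The quantum parameter q. -/
def qq : F := RatFunc.X

/-- Quantum integer [a] = (q^a - q^{-a})/(q - q⁻¹). -/
def qint (a : ℤ) : F := (qq ^ a - qq ^ (-a)) / (qq - qq⁻¹)

/-- Quantum factorial [a]!. -/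
def qfact (a : ℕ) : F := ∏ k ∈ Finset.range a, qint (k + 1)

/-- Quantum binomial coefficient. -/
def qbinom (j p : ℕ) : F := qfact j / (qfact p * qfact (j - p))

instance (n : ℕ) [NeZero n] : NeZero (2 * n) := ⟨by have := NeZero.ne n; omega⟩

/-- Helper instance: zero of a tensor product (works around a stuck instance search). -/
noncomputable instance {R M N : Type*} [CommSemiring R] [AddCommMonoid M] [Module R M]
    [AddCommMonoid N] [Module R N] : Zero (TensorProduct R M N) :=
  (inferInstance : AddCommMonoid (TensorProduct R M N)).toZero

/-- Index set ℤ/2n for nodes of the Dynkin diagram / entries of weight vectors. -/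
abbrev Zn (n : ℕ) := ZMod (2 * n)

/-- Membership in B_l : all entries nonnegative and summing to l. -/
def inB (n : ℕ) [NeZero n] (l : ℕ) (α : Zn n → ℤ) : Prop :=
  (∀ i, 0 ≤ α i) ∧ (∑ i, α i) = (l : ℤ)

/-- The vector space V_{l} with basis indexed by B_l. -/
abbrev V (n : ℕ) [NeZero n] (l : ℕ) := {α : Zn n → ℤ // inB n l α} →₀ F

/-- Basis vector v_α, with the convention that it is 0 if α ∉ B_l
(in particular if α has a negative entry). -/
def vB (n : ℕ) [NeZero n] (l : ℕ) (α : Zn n → ℤ) : V n l :=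
  if h : inB n l α then Finsupp.single ⟨α, h⟩ 1 else 0

/-- Helper: the linear operator sending v_α ↦ c(α) • v_{sh(α)}. -/
def opOf (n : ℕ) [NeZero n] (l : ℕ) (c : (Zn n → ℤ) → F)
    (sh : (Zn n → ℤ) → (Zn n → ℤ)) : V n l →ₗ[F] V n l :=
  Finsupp.lsum F fun a => LinearMap.toSpanSingleton F (V n l) (c a.1 • vB n l (sh a.1))

/-- The i-th standard unit vector e_i of ℤ^{2n}. -/
def eu (n : ℕ) [NeZero n] (i : Zn n) : Zn n → ℤ := fun j => if j = i then 1 else 0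

/-- Chevalley generator e_i on V_{l,x}. -/
def eOp (n : ℕ) [NeZero n] (l : ℕ) (x : F) (i : Zn n) : V n l →ₗ[F] V n l :=
  opOf n l (fun α => (if i = 0 then x else 1) * qint (α (i + 1)))
    (fun α => α + eu n i - eu n (i + 1))

/-- Chevalley generator f_i on V_{l,x}. -/
def fOp (n : ℕ) [NeZero n] (l : ℕ) (x : F) (i : Zn n) : V n l →ₗ[F] V n l :=
  opOf n l (fun α => (if i = 0 then x⁻¹ else 1) * qint (α i))
    (fun α => α - eu n i + eu n (i + 1))

/-- Cartan generator k_i on V_{l,x}. -/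
def kOp (n : ℕ) [NeZero n] (l : ℕ) (i : Zn n) : V n l →ₗ[F] V n l :=
  opOf n l (fun α => qq ^ (α i - α (i + 1))) id

/-- Inverse Cartan generator k_i⁻¹ on V_{l,x}. -/
def kInvOp (n : ℕ) [NeZero n] (l : ℕ) (i : Zn n) : V n l →ₗ[F] V n l :=
  opOf n l (fun α => qq ^ (-(α i - α (i + 1)))) id

/-- e_i on the dual representation V^*_{l,x}. -/
def eSOp (n : ℕ) [NeZero n] (l : ℕ) (x : F) (i : Zn n) : V n l →ₗ[F] V n l :=
  opOf n l (fun α => (if i = 0 then x else 1) * qint (α i))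
    (fun α => α - eu n i + eu n (i + 1))

/-- f_i on the dual representation V^*_{l,x}. -/
def fSOp (n : ℕ) [NeZero n] (l : ℕ) (x : F) (i : Zn n) : V n l →ₗ[F] V n l :=
  opOf n l (fun α => (if i = 0 then x⁻¹ else 1) * qint (α (i + 1)))
    (fun α => α + eu n i - eu n (i + 1))

/-- k_i on the dual representation V^*_{l,x}. -/
def kSOp (n : ℕ) [NeZero n] (l : ℕ) (i : Zn n) : V n l →ₗ[F] V n l :=
  opOf n l (fun α => qq ^ (-(α i - α (i + 1)))) id

/-- k_i⁻¹ on the dual representation V^*_{l,x}. -/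
def kSInvOp (n : ℕ) [NeZero n] (l : ℕ) (i : Zn n) : V n l →ₗ[F] V n l :=
  opOf n l (fun α => qq ^ (α i - α (i + 1))) id

/-- The coideal generator b_i built from families of operators e, f, k⁻¹:
b_i = f_i + γ_i (e_{i+1}e_{i-1}e_i - q⁻¹(e_{i+1}e_ie_{i-1}+e_{i-1}e_ie_{i+1})
  + q⁻²e_ie_{i-1}e_{i+1}) k_i⁻¹. -/
def bOf (n : ℕ) [NeZero n] {M : Type*} [AddCommMonoid M] [Module F M]
    (e f kinv : Zn n → (M →ₗ[F] M)) (γ : Zn n → F) (i : Zn n) : M →ₗ[F] M :=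
  f i + γ i • ((e (i + 1) ∘ₗ e (i - 1) ∘ₗ e i
      + (-qq⁻¹) • (e (i + 1) ∘ₗ e i ∘ₗ e (i - 1) + e (i - 1) ∘ₗ e i ∘ₗ e (i + 1))
      + (qq ^ (-2 : ℤ)) • (e i ∘ₗ e (i - 1) ∘ₗ e (i + 1))) ∘ₗ kinv i)

/-- b_i on V_{l,x}. -/
def bOp (n : ℕ) [NeZero n] (l : ℕ) (x : F) (γ : Zn n → F) (i : Zn n) :
    V n l →ₗ[F] V n l :=
  bOf n (fun j => eOp n l x j) (fun j => fOp n l x j) (fun j => kInvOp n l j) γ i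

/-- b_i on V^*_{l,x}. -/
def bSOp (n : ℕ) [NeZero n] (l : ℕ) (x : F) (γ : Zn n → F) (i : Zn n) :
    V n l →ₗ[F] V n l :=
  bOf n (fun j => eSOp n l x j) (fun j => fSOp n l x j) (fun j => kSInvOp n l j) γ i

/-- Coproduct action of e: E = e ⊗ 1 + k ⊗ e. -/
def coE {M N : Type*} [AddCommGroup M] [Module F M] [AddCommGroup N] [Module F N]
    (e1 k1 : M →ₗ[F] M) (e2 : N →ₗ[F] N) : M ⊗[F] N →ₗ[F] M ⊗[F] N :=
  TensorProduct.map e1 LinearMap.id + TensorProduct.map k1 e2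

/-- Coproduct action of f: F = f ⊗ k⁻¹ + 1 ⊗ f. -/
def coF {M N : Type*} [AddCommGroup M] [Module F M] [AddCommGroup N] [Module F N]
    (f1 : M →ₗ[F] M) (kinv2 f2 : N →ₗ[F] N) : M ⊗[F] N →ₗ[F] M ⊗[F] N :=
  TensorProduct.map f1 kinv2 + TensorProduct.map LinearMap.id f2

/-- Coproduct action of k^{±1}: K = k ⊗ k. -/
def coK {M N : Type*} [AddCommGroup M] [Module F M] [AddCommGroup N] [Module F N]
    (k1 : M →ₗ[F] M) (k2 : N →ₗ[F] N) : M ⊗[F] N →ₗ[F] M ⊗[F] N :=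
  TensorProduct.map k1 k2

/-- A bundle of operator families (e_i, f_i, k_i, k_i⁻¹) on a module. -/
structure Ops (n : ℕ) [NeZero n] (M : Type*) [AddCommGroup M] [Module F M] where
  e : Zn n → M →ₗ[F] M
  f : Zn n → M →ₗ[F] M
  k : Zn n → M →ₗ[F] M
  kinv : Zn n → M →ₗ[F] M

/-- The operator bundle of V_{l,x}. -/
def VOps (n : ℕ) [NeZero n] (l : ℕ) (x : F) : Ops n (V n l) :=
  ⟨fun i => eOp n l x i, fun i => fOp n l x i, fun i => kOp n l i, fun i => kInvOp n l i⟩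

/-- The operator bundle of V^*_{l,x}. -/
def VSOps (n : ℕ) [NeZero n] (l : ℕ) (x : F) : Ops n (V n l) :=
  ⟨fun i => eSOp n l x i, fun i => fSOp n l x i, fun i => kSOp n l i, fun i => kSInvOp n l i⟩

/-- Coproduct operator bundle on a tensor product of two representations. -/
def tensorOps {n : ℕ} [NeZero n] {M N : Type*} [AddCommGroup M] [Module F M]
    [AddCommGroup N] [Module F N] (A : Ops n M) (B : Ops n N) : Ops n (M ⊗[F] N) where
  e := fun i => coE (A.e i) (A.k i) (B.e i)
  f := fun i => coF (A.f i) (B.kinv i) (B.f i)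
  k := fun i => coK (A.k i) (B.k i)
  kinv := fun i => coK (A.kinv i) (B.kinv i)

/-- R intertwines the bundles A and B: R ∘ a = a ∘ R for all generators. -/
def Intertwines {n : ℕ} [NeZero n] {M N : Type*} [AddCommGroup M] [Module F M]
    [AddCommGroup N] [Module F N] (A : Ops n M) (B : Ops n N) (R : M →ₗ[F] N) : Prop :=
  ∀ i : Zn n, R ∘ₗ A.e i = B.e i ∘ₗ R ∧ R ∘ₗ A.f i = B.f i ∘ₗ R ∧
    R ∘ₗ A.k i = B.k i ∘ₗ R ∧ R ∘ₗ A.kinv i = B.kinv i ∘ₗ R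

/-- E_i on V_{l,x} ⊗ V_{m,y}. -/
def tE (n : ℕ) [NeZero n] (l m : ℕ) (x y : F) (i : Zn n) :
    V n l ⊗[F] V n m →ₗ[F] V n l ⊗[F] V n m := (tensorOps (VOps n l x) (VOps n m y)).e i

/-- F_i on V_{l,x} ⊗ V_{m,y}. -/
def tF (n : ℕ) [NeZero n] (l m : ℕ) (x y : F) (i : Zn n) :
    V n l ⊗[F] V n m →ₗ[F] V n l ⊗[F] V n m := (tensorOps (VOps n l x) (VOps n m y)).f i

/-- K_i on V_{l,x} ⊗ V_{m,y}. -/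
def tK (n : ℕ) [NeZero n] (l m : ℕ) (x y : F) (i : Zn n) :
    V n l ⊗[F] V n m →ₗ[F] V n l ⊗[F] V n m := (tensorOps (VOps n l x) (VOps n m y)).k i

/-- K_i⁻¹ on V_{l,x} ⊗ V_{m,y}. -/
def tKInv (n : ℕ) [NeZero n] (l m : ℕ) (x y : F) (i : Zn n) :
    V n l ⊗[F] V n m →ₗ[F] V n l ⊗[F] V n m := (tensorOps (VOps n l x) (VOps n m y)).kinv i

/-- B_i on V_{l,x} ⊗ V_{m,y}. -/
def tB (n : ℕ) [NeZero n] (l m : ℕ) (x y : F) (γ : Zn n → F) (i : Zn n) :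
    V n l ⊗[F] V n m →ₗ[F] V n l ⊗[F] V n m :=
  bOf n (fun j => tE n l m x y j) (fun j => tF n l m x y j) (fun j => tKInv n l m x y j) γ i

/-- The entry permutation σ^{(ε)}: switches α_{i-1} and α_i whenever i ≡ ε (mod 2),
i.e. pairs {ε+2k-1, ε+2k}. -/
def sigmaPerm (n : ℕ) [NeZero n] (ε : ℕ) (j : Zn n) : Zn n :=
  if (j - (ε : Zn n)).val % 2 = 1 then j + 1 else j - 1

/-- Action of σ^{(ε)} on entry vectors. -/
def sigmaAct (n : ℕ) [NeZero n] (ε : ℕ) (α : Zn n → ℤ) : Zn n → ℤ :=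
  fun j => α (sigmaPerm n ε j)

/-- The coefficient of the K matrix:
x^{ε(α_1-α_{2n})} ∏_{j=ε,ε+2,…,ε+2n-2} (-q⁻¹γ_j)^{-∑_{i=ε+1}^{j} α_i}. -/
def Kcoef (n : ℕ) [NeZero n] (x : F) (γ : Zn n → F) (ε : ℕ) (α : Zn n → ℤ) : F :=
  x ^ ((ε : ℤ) * (α 1 - α 0)) *
    ∏ k ∈ Finset.range n,
      (-qq⁻¹ * γ ((ε : Zn n) + 2 * (k : Zn n))) ^
        (-(∑ r ∈ Finset.range (2 * k), α ((ε : Zn n) + 1 + (r : Zn n))))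

/-- The explicit K matrix K(x) : V_{l,x} → V^*_{l,x⁻¹},
v_α ↦ Kcoef(α) v^*_{σ^{(ε)}(α)}. -/
def Kmap (n : ℕ) [NeZero n] (l : ℕ) (x : F) (γ : Zn n → F) (ε : ℕ) :
    V n l →ₗ[F] V n l :=
  opOf n l (fun α => Kcoef n x γ ε α) (sigmaAct n ε)

/-- The simplified K matrix (for γ_j = -q): v_α ↦ x^{ε(α_1-α_{2n})} v^*_{σ^{(ε)}(α)}. -/
def KmapS (n : ℕ) [NeZero n] (l : ℕ) (x : F) (ε : ℕ) : V n l →ₗ[F] V n l :=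
  opOf n l (fun α => x ^ ((ε : ℤ) * (α 1 - α 0))) (sigmaAct n ε)

/-- Cartan matrix of A^{(1)}_{2n-1}: a_{ij} = 2δ_{ij} - δ_{i,j+1} - δ_{i,j-1}. -/
def cartan (n : ℕ) [NeZero n] (i j : Zn n) : ℤ :=
  (if i = j then 2 else 0) - (if i = j + 1 then 1 else 0) - (if i = j - 1 then 1 else 0)

/- ### sl2 representations U_l -/

/-- The (l+1)-dimensional irreducible U_q(sl_2)-module U_l. -/
abbrev UL (l : ℕ) := {p : ℕ × ℕ // p.1 + p.2 = l} →₀ F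

/-- Basis vector u_{(a,b)} of U_l, zero when out of range. -/
def uB (l : ℕ) (a b : ℤ) : UL l :=
  if h : 0 ≤ a ∧ 0 ≤ b ∧ a.toNat + b.toNat = l then Finsupp.single ⟨(a.toNat, b.toNat), h.2.2⟩ 1
  else 0

/-- Helper for sl2 operators. -/
def slOf (l : ℕ) (c : ℕ × ℕ → F) (sh : ℕ × ℕ → ℤ × ℤ) : UL l →ₗ[F] UL l :=
  Finsupp.lsum F fun a => LinearMap.toSpanSingleton F (UL l) (c a.1 • uB l (sh a.1).1 (sh a.1).2)

/-- e on U_l : u_{(a,b)} ↦ [b]u_{(a+1,b-1)}. -/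
def esl (l : ℕ) : UL l →ₗ[F] UL l :=
  slOf l (fun p => qint p.2) (fun p => ((p.1 : ℤ) + 1, (p.2 : ℤ) - 1))

/-- f on U_l : u_{(a,b)} ↦ [a]u_{(a-1,b+1)}. -/
def fsl (l : ℕ) : UL l →ₗ[F] UL l :=
  slOf l (fun p => qint p.1) (fun p => ((p.1 : ℤ) - 1, (p.2 : ℤ) + 1))

/-- k on U_l. -/
def ksl (l : ℕ) : UL l →ₗ[F] UL l :=
  slOf l (fun p => qq ^ ((p.1 : ℤ) - (p.2 : ℤ))) (fun p => ((p.1 : ℤ), (p.2 : ℤ)))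

/-- k⁻¹ on U_l. -/
def kslInv (l : ℕ) : UL l →ₗ[F] UL l :=
  slOf l (fun p => qq ^ (-((p.1 : ℤ) - (p.2 : ℤ)))) (fun p => ((p.1 : ℤ), (p.2 : ℤ)))

/-- The highest weight vector w^{(l,m)}_j of U_{l+m-2j} ⊂ U_l ⊗ U_m. -/
def wsl (l m j : ℕ) : UL l ⊗[F] UL m :=
  ∑ p ∈ Finset.range (j + 1),
    ((-1 : F) ^ p * qq ^ ((p : ℤ) * ((l : ℤ) - p + 1)) * qbinom j p) •
      (uB l ((l : ℤ) - p) p ⊗ₜ[F] uB m ((m : ℤ) - j + p) ((j : ℤ) - p))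

/- ### The U(I_•)-highest weight vectors of V_l ⊗ V_m -/

open Fin.NatCast in
/-- The index t ∈ {1,…,n} (0-based, in Fin n) of the sl2-pair containing
the entry position i : the pairs are {2t-1, 2t}. -/
def pairIdx (n : ℕ) [NeZero n] (i : Zn n) : Fin n :=
  if i.val % 2 = 1 then ((i.val / 2 : ℕ) : Fin n) else (((i.val + 2 * n - 2) / 2 : ℕ) : Fin n)

/-- The entry vector α with α_{2t-1} = l_t - p_t, α_{2t} = p_t. -/
def alphaOf (n : ℕ) [NeZero n] (bl : Fin n → ℤ) (p : Fin n → ℕ) : Zn n → ℤ :=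
  fun i => if i.val % 2 = 1 then bl (pairIdx n i) - p (pairIdx n i) else (p (pairIdx n i) : ℤ)

/-- The entry vector β with β_{2t-1} = m_t - j_t + p_t, β_{2t} = j_t - p_t. -/
def betaOf (n : ℕ) [NeZero n] (bm bj : Fin n → ℤ) (p : Fin n → ℕ) : Zn n → ℤ :=
  fun i => if i.val % 2 = 1 then bm (pairIdx n i) - bj (pairIdx n i) + p (pairIdx n i)
    else bj (pairIdx n i) - p (pairIdx n i)

/-- Admissibility of a triple (𝒍, 𝒎, 𝒋). -/
def adm (n : ℕ) [NeZero n] (l m : ℕ) (bl bm bj : Fin n → ℤ) : Prop :=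
  (∀ t, 0 ≤ bl t) ∧ (∀ t, 0 ≤ bm t) ∧ (∑ t, bl t) = (l : ℤ) ∧ (∑ t, bm t) = (m : ℤ) ∧
    (∀ t, 0 ≤ bj t ∧ bj t ≤ min (bl t) (bm t))

/-- The U(I_•)-highest weight vector 𝒘^{(𝒍,𝒎)}_𝒋 ∈ V_{l,1} ⊗ V_{m,1},
zero when the triple is not admissible. -/
def wbig (n : ℕ) [NeZero n] (l m : ℕ) (bl bm bj : Fin n → ℤ) : V n l ⊗[F] V n m :=
  if adm n l m bl bm bj then
    ∑ p ∈ Fintype.piFinset (fun t => Finset.range ((bj t).toNat + 1)),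
      (∏ t, ((-1 : F) ^ (p t) * qq ^ ((p t : ℤ) * (bl t - p t + 1)) * qbinom (bj t).toNat (p t))) •
        (vB n l (alphaOf n bl p) ⊗ₜ[F] vB n m (betaOf n bm bj p))
  else (0 : V n l ⊗[F] V n m)

/-- The s-th standard unit vector of ℤ^n. -/
def eun (n : ℕ) [NeZero n] (s : Fin n) : Fin n → ℤ := fun t => if t = s then 1 else 0

/-- The Dynkin index i = 2s ∈ ℤ/2n attached to s ∈ {1,…,n} (s 0-based in Fin n). -/
def iZ (n : ℕ) [NeZero n] (s : Fin n) : Zn n := ((2 * s.val + 2 : ℕ) : Zn n)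

/- ### Coefficients from Propositions 4.3–4.5 -/


def cD1 (n : ℕ) [NeZero n] (bl bm bj : Fin n → ℤ) (s : Fin n) : F := -(qq ^ (-(bj s) - bj (s+1) + bl s + bm (s+1) + 1) * qint (bj s))
def cD2 (n : ℕ) [NeZero n] (bl bm bj : Fin n → ℤ) (s : Fin n) : F := qint (bj s)
def cD3 (n : ℕ) [NeZero n] (bl bm bj : Fin n → ℤ) (s : Fin n) : F := -(qq ^ (-(bj s) - bj (s+1) + bl (s+1) + bm (s+1) + 1) * qint (bj (s+1)))
def cD4 (n : ℕ) [NeZero n] (bl bm bj : Fin n → ℤ) (s : Fin n) : F := qq ^ (-2 * bj s - 2 * bj (s+1) + bl s + bl (s+1) + 2 * bm (s+1) + 2) * qint (bj (s+1))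

def cB1 (n : ℕ) [NeZero n] (bl bm bj : Fin n → ℤ) (s : Fin n) : F := qq ^ (bj s - bj (s+1) - bm s + bm (s+1)) * qint (bl s - bj s)
def cB2 (n : ℕ) [NeZero n] (bl bm bj : Fin n → ℤ) (s : Fin n) : F := qint (bm s - bj s)
def cB3 (n : ℕ) [NeZero n] (bl bm bj : Fin n → ℤ) (s : Fin n) : F := -(qq ^ (bj s - bj (s+1) - bl s - bm s + bl (s+1) + bm (s+1)) * qint (bm s - bj s))
def cB4 (n : ℕ) [NeZero n] (bl bm bj : Fin n → ℤ) (s : Fin n) : F := -(qq ^ (2 * bj s - 2 * bj (s+1) - bl s - 2 * bm s + bl (s+1) + 2 * bm (s+1)) * qint (bl s - bj s))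

def cC1 (n : ℕ) [NeZero n] (bl bm bj : Fin n → ℤ) (s : Fin n) : F := -(qq ^ (-(bj s) + bj (s+1) + bl s - bl (s+1)) * qint (bm (s+1) - bj (s+1)))
def cC2 (n : ℕ) [NeZero n] (bl bm bj : Fin n → ℤ) (s : Fin n) : F := -qint (bl (s+1) - bj (s+1))
def cC3 (n : ℕ) [NeZero n] (bl bm bj : Fin n → ℤ) (s : Fin n) : F := qq ^ (-(bj s) + bj (s+1)) * qint (bl (s+1) - bj (s+1))
def cC4 (n : ℕ) [NeZero n] (bl bm bj : Fin n → ℤ) (s : Fin n) : F := qq ^ (-2 * bj s + 2 * bj (s+1) + bl s - bl (s+1)) * qint (bm (s+1) - bj (s+1))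

/-- The denominator N = [l_s+m_s-2j_s+1][l_{s+1}+m_{s+1}-2j_{s+1}+1]. -/
def cN (n : ℕ) [NeZero n] (bl bm bj : Fin n → ℤ) (s : Fin n) : F := qint (bl s + bm s - 2 * bj s + 1) * qint (bl (s+1) + bm (s+1) - 2 * bj (s+1) + 1)


/-- A_1 as a function of the six integers l_s, l_{s+1}, m_s, m_{s+1}, j_s, j_{s+1}. -/
def sA1 (ls ls1 ms ms1 js js1 : ℤ) : F :=
  qq ^ (js + js1 - ls1 - ms - 1) * qint (ls - js) * qint (ms1 - js1) * qint (ls + ms - js + 1)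
    / (qint (ls + ms - 2 * js + 1) * qint (ls1 + ms1 - 2 * js1 + 1))

def sA2 (ls ls1 ms ms1 js js1 : ℤ) : F :=
  -(qint (ls1 - js1) * qint (ms - js) * qint (ls + ms - js + 1))
    / (qint (ls + ms - 2 * js + 1) * qint (ls1 + ms1 - 2 * js1 + 1))

def sA3 (ls ls1 ms ms1 js js1 : ℤ) : F :=
  qq ^ (js + js1 - ls - ms - 1) * qint (ls1 - js1) * qint (ms - js) * qint (ls1 + ms1 - js1 + 1)
    / (qint (ls + ms - 2 * js + 1) * qint (ls1 + ms1 - 2 * js1 + 1))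

def sA4 (ls ls1 ms ms1 js js1 : ℤ) : F :=
  -(qq ^ (2 * js + 2 * js1 - ls - ls1 - 2 * ms - 2) * qint (ls - js) * qint (ms1 - js1)
      * qint (ls1 + ms1 - js1 + 1))
    / (qint (ls + ms - 2 * js + 1) * qint (ls1 + ms1 - 2 * js1 + 1))


def cA1 (n : ℕ) [NeZero n] (bl bm bj : Fin n → ℤ) (s : Fin n) : F := sA1 (bl s) (bl (s+1)) (bm s) (bm (s+1)) (bj s) (bj (s+1))
def cA2 (n : ℕ) [NeZero n] (bl bm bj : Fin n → ℤ) (s : Fin n) : F := sA2 (bl s) (bl (s+1)) (bm s) (bm (s+1)) (bj s) (bj (s+1))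
def cA3 (n : ℕ) [NeZero n] (bl bm bj : Fin n → ℤ) (s : Fin n) : F := sA3 (bl s) (bl (s+1)) (bm s) (bm (s+1)) (bj s) (bj (s+1))
def cA4 (n : ℕ) [NeZero n] (bl bm bj : Fin n → ℤ) (s : Fin n) : F := sA4 (bl s) (bl (s+1)) (bm s) (bm (s+1)) (bj s) (bj (s+1))

def cBB1 (n : ℕ) [NeZero n] (bl bm bj : Fin n → ℤ) (s : Fin n) : F := cB1 n bl bm bj s * qint (bl s + bm s - bj s + 1)
  * qint (bl (s+1) + bm (s+1) - 2 * bj (s+1)) / cN n bl bm bj s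
def cBB2 (n : ℕ) [NeZero n] (bl bm bj : Fin n → ℤ) (s : Fin n) : F := cB2 n bl bm bj s * qint (bl s + bm s - bj s + 1)
  * qint (bl (s+1) + bm (s+1) - 2 * bj (s+1)) / cN n bl bm bj s
def cBB3 (n : ℕ) [NeZero n] (bl bm bj : Fin n → ℤ) (s : Fin n) : F := cB3 n bl bm bj s * qint (bj (s+1))
  * qint (bl (s+1) + bm (s+1) - 2 * bj (s+1)) / cN n bl bm bj s
def cBB4 (n : ℕ) [NeZero n] (bl bm bj : Fin n → ℤ) (s : Fin n) : F := cB4 n bl bm bj s * qint (bj (s+1))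
  * qint (bl (s+1) + bm (s+1) - 2 * bj (s+1)) / cN n bl bm bj s

def cCC1 (n : ℕ) [NeZero n] (bl bm bj : Fin n → ℤ) (s : Fin n) : F := cC1 n bl bm bj s * qint (bj s) * qint (bl s + bm s - 2 * bj s) / cN n bl bm bj s
def cCC2 (n : ℕ) [NeZero n] (bl bm bj : Fin n → ℤ) (s : Fin n) : F := cC2 n bl bm bj s * qint (bj s) * qint (bl s + bm s - 2 * bj s) / cN n bl bm bj s
def cCC3 (n : ℕ) [NeZero n] (bl bm bj : Fin n → ℤ) (s : Fin n) : F := cC3 n bl bm bj s * qint (bl s + bm s - 2 * bj s)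
  * qint (bl (s+1) + bm (s+1) - bj (s+1) + 1) / cN n bl bm bj s
def cCC4 (n : ℕ) [NeZero n] (bl bm bj : Fin n → ℤ) (s : Fin n) : F := cC4 n bl bm bj s * qint (bl s + bm s - 2 * bj s)
  * qint (bl (s+1) + bm (s+1) - bj (s+1) + 1) / cN n bl bm bj s

def cDD1 (n : ℕ) [NeZero n] (bl bm bj : Fin n → ℤ) (s : Fin n) : F := cD1 n bl bm bj s * qint (bl s + bm s - 2 * bj s)
  * qint (bl (s+1) + bm (s+1) - 2 * bj (s+1)) / cN n bl bm bj s
def cDD2 (n : ℕ) [NeZero n] (bl bm bj : Fin n → ℤ) (s : Fin n) : F := cD2 n bl bm bj s * qint (bl s + bm s - 2 * bj s)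
  * qint (bl (s+1) + bm (s+1) - 2 * bj (s+1)) / cN n bl bm bj s
def cDD3 (n : ℕ) [NeZero n] (bl bm bj : Fin n → ℤ) (s : Fin n) : F := cD3 n bl bm bj s * qint (bl s + bm s - 2 * bj s)
  * qint (bl (s+1) + bm (s+1) - 2 * bj (s+1)) / cN n bl bm bj s
def cDD4 (n : ℕ) [NeZero n] (bl bm bj : Fin n → ℤ) (s : Fin n) : F := cD4 n bl bm bj s * qint (bl s + bm s - 2 * bj s)
  * qint (bl (s+1) + bm (s+1) - 2 * bj (s+1)) / cN n bl bm bj s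


/-- The entry of the matrix C of Proposition 4.8, for row data (s, 𝒍, 𝒎, 𝒋)
and column data (𝒍', 𝒎', 𝒋'). -/
def Centry (n : ℕ) [NeZero n] (s : Fin n) (bl bm bj bl' bm' bj' : Fin n → ℤ) : F :=
  if bl' = bl - eun n s + eun n (s + 1) ∧ bm' = bm ∧ bj' = bj + eun n (s + 1) then
    cA1 n bl bm bj s
  else if bl' = bl ∧ bm' = bm - eun n s + eun n (s + 1) ∧ bj' = bj + eun n (s + 1) then
    cA2 n bl bm bj s
  else if bl' = bl + eun n s - eun n (s + 1) ∧ bm' = bm ∧ bj' = bj + eun n s then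
    cA3 n bl bm bj s
  else if bl' = bl ∧ bm' = bm + eun n s - eun n (s + 1) ∧ bj' = bj + eun n s then
    cA4 n bl bm bj s
  else 0

/-- f ∈ ℚ(q) is regular at q = 0 and vanishes there (i.e. f ∈ qA). -/
def vanishesAt0 (f : F) : Prop :=
  ∃ a b : Polynomial ℚ, Polynomial.eval 0 b ≠ 0 ∧ Polynomial.eval 0 a = 0 ∧
    f = algebraMap (Polynomial ℚ) F a / algebraMap (Polynomial ℚ) F b

/-! ### Auxiliary lemmas for statement5 -/

section Aux

lemma qq_ne_zero' : qq ≠ 0 := RatFunc.X_ne_zero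

lemma qq_pow_ne_one' {m : ℕ} (hm : m ≠ 0) : qq ^ m ≠ 1 := by
  intro h
  have : (Polynomial.X : Polynomial ℚ) ^ m = 1 := by
    apply RatFunc.algebraMap_injective ℚ
    simpa [qq, map_pow, RatFunc.algebraMap_X] using h
  have := congrArg Polynomial.natDegree this
  simp [Polynomial.natDegree_X_pow] at this
  exact hm this

lemma qq_zpow_eq_one' {k : ℤ} (h : qq ^ k = 1) : k = 0 := by
  rcases lt_trichotomy k 0 with hk | hk | hk
  · exfalso
    have h' : qq ^ (-k) = 1 := by
      rw [zpow_neg, h, inv_one]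
    rw [show -k = ((-k).toNat : ℤ) by omega, zpow_natCast] at h'
    exact qq_pow_ne_one' (by omega) h'
  · exact hk
  · exfalso
    rw [show k = (k.toNat : ℤ) by omega, zpow_natCast] at h
    exact qq_pow_ne_one' (by omega) h

lemma qq_zpow_inj' {u v : ℤ} (h : qq ^ u = qq ^ v) : u = v := by
  have : qq ^ (u - v) = 1 := by
    rw [zpow_sub₀ qq_ne_zero', h, div_self (zpow_ne_zero _ qq_ne_zero')]
  have := qq_zpow_eq_one' this
  omega

lemma qden_ne_zero' : qq - qq⁻¹ ≠ 0 := by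
  intro h
  have h2 : qq * qq = qq * qq⁻¹ := by
    rw [sub_eq_zero] at h
    rw [← h]
  rw [mul_inv_cancel₀ qq_ne_zero'] at h2
  have : qq ^ (2:ℕ) = 1 := by rw [pow_two]; exact h2
  exact qq_pow_ne_one' (by norm_num) this

lemma qint_zero' : qint 0 = 0 := by simp [qint]

lemma qint_ne_zero' {m : ℤ} (hm : m ≠ 0) : qint m ≠ 0 := by
  apply div_ne_zero _ qden_ne_zero'
  intro h
  rw [sub_eq_zero] at h
  have := qq_zpow_inj' h
  omega

lemma vB_apply' (n l : ℕ) [NeZero n] (γ β : Zn n → ℤ) (hβ : inB n l β) :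
    (vB n l γ) ⟨β, hβ⟩ = if γ = β then 1 else 0 := by
  rw [vB]
  split_ifs with h h2 h2
  · rw [Finsupp.single_apply, if_pos (by exact Subtype.ext h2)]
  · rw [Finsupp.single_apply, if_neg (by simp [Subtype.ext_iff, h2])]
  · exact absurd (h2 ▸ hβ) h
  · simp

lemma vB_not' (n l : ℕ) [NeZero n] (γ : Zn n → ℤ) (h : ¬ inB n l γ) : vB n l γ = 0 :=
  dif_neg h

lemma opOf_single' (n l : ℕ) [NeZero n] (c : (Zn n → ℤ) → F)
    (sh : (Zn n → ℤ) → (Zn n → ℤ)) {α : Zn n → ℤ} (hα : inB n l α) :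
    opOf n l c sh (vB n l α) = c α • vB n l (sh α) := by
  rw [vB, dif_pos hα, opOf, Finsupp.lsum_single, LinearMap.toSpanSingleton_apply, one_smul]

lemma opOf_coeff' (n l : ℕ) [NeZero n] (c : (Zn n → ℤ) → F)
    (sh : (Zn n → ℤ) → (Zn n → ℤ)) (f : V n l) (β γ : Zn n → ℤ) (hβ : inB n l β)
    (hsh : ∀ a : Zn n → ℤ, sh a = β ↔ a = γ) :
    (opOf n l c sh f) ⟨β, hβ⟩
      = c γ * (if h : inB n l γ then f ⟨γ, h⟩ else 0) := by
  induction f using Finsupp.induction_linear with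
  | zero => simp
  | add f g hf hg =>
      rw [map_add, Finsupp.add_apply, hf, hg]
      split_ifs <;> simp <;> ring
  | single a r =>
      rw [opOf, Finsupp.lsum_single, LinearMap.toSpanSingleton_apply, smul_smul,
        Finsupp.smul_apply, vB_apply' n l _ _ hβ, smul_eq_mul]
      by_cases hc : a.1 = γ
      · have hγ : inB n l γ := hc ▸ a.2
        rw [if_pos ((hsh _).mpr hc), dif_pos hγ, Finsupp.single_apply,
          if_pos (by exact Subtype.ext hc), mul_one, hc]
        ring
      · rw [if_neg (fun h => hc ((hsh _).mp h)), mul_zero]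
        split_ifs with h
        · rw [Finsupp.single_apply, if_neg (by simp [Subtype.ext_iff]; exact hc),
            mul_zero]
        · rw [mul_zero]

/-- Matrix coefficient of K. -/
def dcoef (n l : ℕ) [NeZero n] (K : V n l →ₗ[F] V n l) (α β : Zn n → ℤ) : F :=
  if h : inB n l β then K (vB n l α) ⟨β, h⟩ else 0

lemma dcoef_eq (n l : ℕ) [NeZero n] (K : V n l →ₗ[F] V n l) (α β : Zn n → ℤ)
    (hβ : inB n l β) : dcoef n l K α β = K (vB n l α) ⟨β, hβ⟩ := dif_pos hβ

lemma dcoef_not_right (n l : ℕ) [NeZero n] (K : V n l →ₗ[F] V n l) (α β : Zn n → ℤ)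
    (hβ : ¬ inB n l β) : dcoef n l K α β = 0 := dif_neg hβ

lemma dcoef_not_left (n l : ℕ) [NeZero n] (K : V n l →ₗ[F] V n l) (α β : Zn n → ℤ)
    (hα : ¬ inB n l α) : dcoef n l K α β = 0 := by
  rw [dcoef, vB_not' n l α hα, map_zero]
  split_ifs <;> simp

lemma one_ne_zero'' (n : ℕ) [NeZero n] : (1 : Zn n) ≠ 0 := by
  have h2 : 1 < 2 * n := by have := Nat.pos_of_ne_zero (NeZero.ne n); omega
  intro h
  have := congrArg ZMod.val h
  rw [ZMod.val_one_eq_one_mod, Nat.mod_eq_of_lt h2, ZMod.val_zero] at this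
  exact one_ne_zero this

lemma self_ne_succ' (n : ℕ) [NeZero n] (i : Zn n) : i ≠ i + 1 := by
  intro h
  have : (0 : Zn n) = 1 := by
    have := congrArg (fun y => y - i) h
    simpa using this
  exact one_ne_zero'' n this.symm

lemma eu_self' (n : ℕ) [NeZero n] (i : Zn n) : eu n i i = 1 := by simp [eu]

lemma eu_ne' (n : ℕ) [NeZero n] {i j : Zn n} (h : j ≠ i) : eu n i j = 0 := by
  simp [eu, h]

lemma apply_shift_i (n : ℕ) [NeZero n] (β : Zn n → ℤ) (i : Zn n) :
    (β + eu n i - eu n (i+1)) i = β i + 1 := by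
  simp only [Pi.sub_apply, Pi.add_apply, eu_self' n i, eu_ne' n (self_ne_succ' n i)]
  ring

lemma apply_shift_i1 (n : ℕ) [NeZero n] (β : Zn n → ℤ) (i : Zn n) :
    (β + eu n i - eu n (i+1)) (i+1) = β (i+1) - 1 := by
  simp only [Pi.sub_apply, Pi.add_apply, eu_self' n (i+1),
    eu_ne' n (Ne.symm (self_ne_succ' n i))]
  ring

lemma relE' (n l : ℕ) [NeZero n] (x : F) (K : V n l →ₗ[F] V n l) (i : Zn n)
    (hK : K ∘ₗ eOp n l x i = eSOp n l x⁻¹ i ∘ₗ K)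
    (α β : Zn n → ℤ) (hα : inB n l α) (hβ : inB n l β) :
    (if i = 0 then x else 1) * qint (α (i+1)) * dcoef n l K (α + eu n i - eu n (i+1)) β
      = (if i = 0 then x⁻¹ else 1) * qint (β i + 1)
          * dcoef n l K α (β + eu n i - eu n (i+1)) := by
  have h := LinearMap.congr_fun hK (vB n l α)
  rw [LinearMap.comp_apply, LinearMap.comp_apply] at h
  rw [eOp, opOf_single' n l _ _ hα, map_smul] at h
  have h2 := DFunLike.congr_fun h ⟨β, hβ⟩
  rw [Finsupp.smul_apply, smul_eq_mul] at h2
  rw [eSOp, opOf_coeff' n l _ _ _ β (β + eu n i - eu n (i+1)) hβ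
    (fun a => ⟨fun h' => by rw [← h']; abel, fun h' => by rw [h']; abel⟩)] at h2
  rw [apply_shift_i n β i] at h2
  rw [dcoef_eq n l K _ β hβ, dcoef]
  linear_combination h2

lemma relF' (n l : ℕ) [NeZero n] (x : F) (K : V n l →ₗ[F] V n l) (i : Zn n)
    (hK : K ∘ₗ fOp n l x i = fSOp n l x⁻¹ i ∘ₗ K)
    (α β : Zn n → ℤ) (hα : inB n l α) (hβ : inB n l β) :
    (if i = 0 then x⁻¹ else 1) * qint (α i) * dcoef n l K (α - eu n i + eu n (i+1)) β
      = (if i = 0 then x else 1) * qint (β (i+1) + 1)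
          * dcoef n l K α (β - eu n i + eu n (i+1)) := by
  have h := LinearMap.congr_fun hK (vB n l α)
  rw [LinearMap.comp_apply, LinearMap.comp_apply] at h
  rw [fOp, opOf_single' n l _ _ hα, map_smul] at h
  have h2 := DFunLike.congr_fun h ⟨β, hβ⟩
  rw [Finsupp.smul_apply, smul_eq_mul] at h2
  rw [fSOp, opOf_coeff' n l _ _ _ β (β - eu n i + eu n (i+1)) hβ
    (fun a => ⟨fun h' => by rw [← h']; abel, fun h' => by rw [h']; abel⟩)] at h2
  have he : (β - eu n i + eu n (i+1)) (i+1) = β (i+1) + 1 := by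
    simp only [Pi.sub_apply, Pi.add_apply, eu_self' n (i+1),
      eu_ne' n (Ne.symm (self_ne_succ' n i))]
    ring
  rw [he, inv_inv] at h2
  rw [dcoef_eq n l K _ β hβ, dcoef]
  linear_combination h2

lemma relK' (n l : ℕ) [NeZero n] (K : V n l →ₗ[F] V n l) (i : Zn n)
    (hK : K ∘ₗ kOp n l i = kSOp n l i ∘ₗ K)
    (α β : Zn n → ℤ) (hα : inB n l α) (hβ : inB n l β)
    (hw : β (i+1) - β i ≠ α i - α (i+1)) : dcoef n l K α β = 0 := by
  have h := LinearMap.congr_fun hK (vB n l α)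
  rw [LinearMap.comp_apply, LinearMap.comp_apply] at h
  rw [kOp, opOf_single' n l _ _ hα, map_smul] at h
  have h2 := DFunLike.congr_fun h ⟨β, hβ⟩
  rw [Finsupp.smul_apply, smul_eq_mul] at h2
  rw [kSOp, opOf_coeff' n l _ id _ β β hβ (fun a => Iff.rfl), dif_pos hβ] at h2
  by_contra hne
  rw [dcoef_eq n l K α β hβ] at hne
  have h3 := mul_right_cancel₀ hne h2
  have := qq_zpow_inj' h3
  omega

lemma sum_eu' (n : ℕ) [NeZero n] (i : Zn n) : ∑ j, eu n i j = 1 := by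
  simp [eu]

lemma shift_apply (n : ℕ) [NeZero n] (α : Zn n → ℤ) (i : Zn n) (t : ℤ) (j : Zn n) :
    (α + t • eu n i - t • eu n (i+1)) j = α j + t * eu n i j - t * eu n (i+1) j := by
  simp

lemma shift_apply_i (n : ℕ) [NeZero n] (α : Zn n → ℤ) (i : Zn n) (t : ℤ) :
    (α + t • eu n i - t • eu n (i+1)) i = α i + t := by
  rw [shift_apply, eu_self' n i, eu_ne' n (self_ne_succ' n i)]; ring

lemma shift_apply_i1 (n : ℕ) [NeZero n] (α : Zn n → ℤ) (i : Zn n) (t : ℤ) :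
    (α + t • eu n i - t • eu n (i+1)) (i+1) = α (i+1) - t := by
  rw [shift_apply, eu_self' n (i+1), eu_ne' n (Ne.symm (self_ne_succ' n i))]; ring

lemma shift_apply_other (n : ℕ) [NeZero n] (α : Zn n → ℤ) (i : Zn n) (t : ℤ) {j : Zn n}
    (hj : j ≠ i) (hj2 : j ≠ i + 1) :
    (α + t • eu n i - t • eu n (i+1)) j = α j := by
  rw [shift_apply, eu_ne' n hj, eu_ne' n hj2]; ring

lemma sum_shift (n : ℕ) [NeZero n] (α : Zn n → ℤ) (i : Zn n) (t : ℤ) :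
    ∑ j, (α + t • eu n i - t • eu n (i+1)) j = ∑ j, α j := by
  simp only [Pi.sub_apply, Pi.add_apply, Pi.smul_apply, smul_eq_mul]
  rw [Finset.sum_sub_distrib, Finset.sum_add_distrib, ← Finset.mul_sum, ← Finset.mul_sum,
    sum_eu' n i, sum_eu' n (i+1)]
  ring

lemma inB_shift (n l : ℕ) [NeZero n] {α : Zn n → ℤ} (h : inB n l α) (i : Zn n) (t : ℤ)
    (h1 : 0 ≤ α i + t) (h2 : 0 ≤ α (i+1) - t) :
    inB n l (α + t • eu n i - t • eu n (i+1)) := by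
  constructor
  · intro j
    by_cases hj : j = i
    · subst hj; rw [shift_apply_i]; exact h1
    by_cases hj2 : j = i + 1
    · subst hj2; rw [shift_apply_i1]; exact h2
    · rw [shift_apply_other n α i t hj hj2]; exact h.1 j
  · rw [sum_shift]; exact h.2

lemma not_inB_neg (n l : ℕ) [NeZero n] {α : Zn n → ℤ} {j : Zn n} (h : α j < 0) :
    ¬ inB n l α := fun hB => absurd (hB.1 j) (by omega)

lemma val_add_mod_two (n : ℕ) [NeZero n] (a b : Zn n) :
    (a + b).val % 2 = (a.val + b.val) % 2 := by
  rw [ZMod.val_add, Nat.mod_mod_of_dvd _ ⟨n, rfl⟩]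

lemma val_one_Zn (n : ℕ) [NeZero n] : (1 : Zn n).val = 1 := by
  rw [ZMod.val_one_eq_one_mod]
  exact Nat.mod_eq_of_lt (by have := Nat.pos_of_ne_zero (NeZero.ne n); omega)

lemma bullet_iff (n : ℕ) [NeZero n] {ε : ℕ} (hε : ε = 0 ∨ ε = 1) (i : Zn n) :
    i.val % 2 ≠ ε ↔ (i - (ε : Zn n)).val % 2 = 1 := by
  have hεv : ((ε : ℕ) : Zn n).val = ε := by
    rw [ZMod.val_natCast]
    exact Nat.mod_eq_of_lt (by have := Nat.pos_of_ne_zero (NeZero.ne n); omega)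
  have h := val_add_mod_two n (i - (ε : Zn n)) (ε : Zn n)
  rw [sub_add_cancel, hεv] at h
  have h2 : i.val % 2 < 2 := Nat.mod_lt _ (by norm_num)
  have h3 : (i - (ε : Zn n)).val % 2 < 2 := Nat.mod_lt _ (by norm_num)
  rcases hε with rfl | rfl <;> omega

lemma sp_bullet {n : ℕ} [NeZero n] {ε : ℕ} {i : Zn n}
    (hb : (i - (ε : Zn n)).val % 2 = 1) : sigmaPerm n ε i = i + 1 := by
  rw [sigmaPerm, if_pos hb]

lemma succ_parity (n : ℕ) [NeZero n] (ε : ℕ) (j : Zn n) :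
    (j + 1 - (ε : Zn n)).val % 2 = ((j - (ε : Zn n)).val + 1) % 2 := by
  rw [show j + 1 - (ε : Zn n) = (j - (ε : Zn n)) + 1 by ring, val_add_mod_two, val_one_Zn]

lemma sp_bullet1 {n : ℕ} [NeZero n] {ε : ℕ} {i : Zn n}
    (hb : (i - (ε : Zn n)).val % 2 = 1) : sigmaPerm n ε (i + 1) = i := by
  have h := succ_parity n ε i
  rw [sigmaPerm, if_neg (by omega)]
  ring

lemma sp_invol (n : ℕ) [NeZero n] (ε : ℕ) : Function.Involutive (sigmaPerm n ε) := by
  intro j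
  by_cases h : (j - (ε : Zn n)).val % 2 = 1
  · rw [sp_bullet h, sp_bullet1 h]
  · have h0 : (j - 1 + 1 - (ε : Zn n)).val % 2 = ((j - 1 - (ε : Zn n)).val + 1) % 2 :=
      succ_parity n ε (j - 1)
    rw [sub_add_cancel] at h0
    have h1 : (j - 1 - (ε : Zn n)).val % 2 = 1 := by
      have h3 : (j - 1 - (ε : Zn n)).val % 2 < 2 := Nat.mod_lt _ (by norm_num)
      have h4 : (j - (ε : Zn n)).val % 2 < 2 := Nat.mod_lt _ (by norm_num)
      omega
    have hj : sigmaPerm n ε j = j - 1 := by rw [sigmaPerm, if_neg h]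
    rw [hj, sp_bullet h1, sub_add_cancel]

lemma inB_sigma (n l : ℕ) [NeZero n] (ε : ℕ) {α : Zn n → ℤ} (hα : inB n l α) :
    inB n l (sigmaAct n ε α) := by
  refine ⟨fun j => hα.1 _, ?_⟩
  have := Equiv.sum_comp
    (⟨sigmaPerm n ε, sigmaPerm n ε, sp_invol n ε, sp_invol n ε⟩ : Equiv (Zn n) (Zn n)) α
  change ∑ j, α (sigmaPerm n ε j) = ∑ j, α j at this
  rw [show (∑ j, sigmaAct n ε α j) = ∑ j, α (sigmaPerm n ε j) from rfl, this]
  exact hα.2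

lemma sp_eq_iff (n : ℕ) [NeZero n] (ε : ℕ) (j k : Zn n) :
    sigmaPerm n ε j = k ↔ j = sigmaPerm n ε k := by
  constructor
  · intro h; rw [← h, sp_invol n ε j]
  · intro h; rw [h, sp_invol n ε k]

lemma sigmaAct_add (n : ℕ) [NeZero n] (ε : ℕ) (α v : Zn n → ℤ) :
    sigmaAct n ε (α + v) = sigmaAct n ε α + sigmaAct n ε v := rfl

lemma sigmaAct_sub (n : ℕ) [NeZero n] (ε : ℕ) (α v : Zn n → ℤ) :
    sigmaAct n ε (α - v) = sigmaAct n ε α - sigmaAct n ε v := rfl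

lemma sigmaAct_eu (n : ℕ) [NeZero n] {ε : ℕ} {i : Zn n}
    (hb : (i - (ε : Zn n)).val % 2 = 1) :
    sigmaAct n ε (eu n i) = eu n (i + 1) := by
  funext j
  show eu n i (sigmaPerm n ε j) = eu n (i+1) j
  by_cases h : j = i + 1
  · subst h; rw [sp_bullet1 hb, eu_self', eu_self']
  · rw [eu_ne' n h, eu_ne' n (fun hc => h (by rw [(sp_eq_iff n ε j i).mp hc, sp_bullet hb]))]

lemma sigmaAct_eu1 (n : ℕ) [NeZero n] {ε : ℕ} {i : Zn n}
    (hb : (i - (ε : Zn n)).val % 2 = 1) :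
    sigmaAct n ε (eu n (i + 1)) = eu n i := by
  funext j
  show eu n (i+1) (sigmaPerm n ε j) = eu n i j
  by_cases h : j = i
  · subst h; rw [sp_bullet hb, eu_self', eu_self']
  · rw [eu_ne' n h, eu_ne' n (fun hc => h (by rw [(sp_eq_iff n ε j (i+1)).mp hc, sp_bullet1 hb]))]

lemma xf_ne_zero {x : F} (hx : x ≠ 0) (P : Prop) [Decidable P] :
    (if P then x else 1) ≠ 0 := by
  split_ifs
  · exact hx
  · exact one_ne_zero

lemma keyvanish (n l : ℕ) [NeZero n] (x : F) (hx : x ≠ 0) (K : V n l →ₗ[F] V n l)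
    (i : Zn n)
    (hKe : K ∘ₗ eOp n l x i = eSOp n l x⁻¹ i ∘ₗ K)
    (hKf : K ∘ₗ fOp n l x i = fSOp n l x⁻¹ i ∘ₗ K)
    (α β : Zn n → ℤ) (hα : inB n l α) (hβ : inB n l β)
    (hd : β (i+1) - β i = α i - α (i+1))
    (hmm : β i ≠ α (i+1)) :
    dcoef n l K α β = 0 := by
  set δ : ℤ := β i - α (i+1) with hδdef
  have hδ : δ ≠ 0 := by omega
  have hβ1 : β (i+1) = α i + δ := by omega
  set A : ℕ → (Zn n → ℤ) :=
    fun s => α + ((s : ℤ) - α i) • eu n i - ((s : ℤ) - α i) • eu n (i+1) with hA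
  set Bv : ℕ → (Zn n → ℤ) :=
    fun s => β + (α i - (s : ℤ)) • eu n i - (α i - (s : ℤ)) • eu n (i+1) with hBv
  have hAi : ∀ s : ℕ, A s i = (s : ℤ) := by
    intro s; simp only [hA]; rw [shift_apply_i]; ring
  have hAi1 : ∀ s : ℕ, A s (i+1) = α i + α (i+1) - (s : ℤ) := by
    intro s; simp only [hA]; rw [shift_apply_i1]; ring
  have hBvi1 : ∀ s : ℕ, Bv s (i+1) = δ + (s : ℤ) := by
    intro s; simp only [hBv]; rw [shift_apply_i1]; omega
  have key : ∀ s : ℕ, dcoef n l K (A s) (Bv s) = 0 := by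
    intro s
    induction s with
    | zero =>
        rcases lt_or_gt_of_ne hδ with hneg | hpos
        · refine dcoef_not_right n l K _ _ (not_inB_neg n l (j := i+1) ?_)
          rw [hBvi1 0]; omega
        · have hA0 : inB n l (A 0) := by
            simp only [hA]
            exact inB_shift n l hα i _ (by push_cast; omega)
              (by have := hα.1 i; have := hα.1 (i+1); push_cast; omega)
          set β' : Zn n → ℤ := β + (α i + 1) • eu n i - (α i + 1) • eu n (i+1) with hβ'
          have hβ'B : inB n l β' := by
            rw [hβ']
            exact inB_shift n l hβ i _ (by have := hα.1 i; have := hβ.1 i; omega)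
              (by omega)
          have h := relF' n l x K i hKf (A 0) β' hA0 hβ'B
          have e1 : A 0 i = 0 := by rw [hAi 0]; norm_num
          have e2 : β' (i+1) = δ - 1 := by simp only [hβ']; rw [shift_apply_i1]; omega
          have e3 : β' - eu n i + eu n (i+1) = Bv 0 := by
            funext j
            simp only [hβ', hBv]
            simp only [Pi.add_apply, Pi.sub_apply, Pi.smul_apply, smul_eq_mul]
            push_cast
            ring
          rw [e1, e2, e3, qint_zero', mul_zero, zero_mul] at h
          have h2 : qint (δ - 1 + 1) = qint δ := by norm_num
          rw [h2] at h
          have hne := mul_ne_zero (xf_ne_zero hx (i = 0)) (qint_ne_zero' hδ)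
          rcases mul_eq_zero.mp h.symm with h' | h'
          · exact absurd h' hne
          · exact h'
    | succ s ih =>
        by_cases hBin : inB n l (Bv (s+1))
        · by_cases hAin : inB n l (A (s+1))
          · have hentry : 0 ≤ α i + α (i+1) - ((s:ℤ) + 1) := by
              have := hAin.1 (i+1)
              rw [hAi1 (s+1)] at this
              push_cast at this ⊢
              omega
            have hAs : inB n l (A s) := by
              simp only [hA]
              exact inB_shift n l hα i _ (by push_cast; omega) (by push_cast; omega)
            have h := relE' n l x K i hKe (A s) (Bv (s+1)) hAs hBin
            have e1 : A s + eu n i - eu n (i+1) = A (s+1) := by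
              funext j
              simp only [hA]
              simp only [Pi.add_apply, Pi.sub_apply, Pi.smul_apply, smul_eq_mul]
              push_cast
              ring
            have e2 : Bv (s+1) + eu n i - eu n (i+1) = Bv s := by
              funext j
              simp only [hBv]
              simp only [Pi.add_apply, Pi.sub_apply, Pi.smul_apply, smul_eq_mul]
              push_cast
              ring
            rw [e1, e2, ih, mul_zero, hAi1 s] at h
            have hq : qint (α i + α (i+1) - (s:ℤ)) ≠ 0 := qint_ne_zero' (by omega)
            rcases mul_eq_zero.mp h with h' | h'
            · rcases mul_eq_zero.mp h' with h'' | h''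
              · exact absurd h'' (xf_ne_zero hx (i = 0))
              · exact absurd h'' hq
            · exact h'
          · exact dcoef_not_left n l K _ _ hAin
        · exact dcoef_not_right n l K _ _ hBin
  have hA' : A (α i).toNat = α := by
    have h0 : ((α i).toNat : ℤ) = α i := Int.toNat_of_nonneg (hα.1 i)
    funext j
    simp only [hA]
    simp only [Pi.add_apply, Pi.sub_apply, Pi.smul_apply, smul_eq_mul, h0]
    ring
  have hB' : Bv (α i).toNat = β := by
    have h0 : ((α i).toNat : ℤ) = α i := Int.toNat_of_nonneg (hα.1 i)
    funext j
    simp only [hBv]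
    simp only [Pi.add_apply, Pi.sub_apply, Pi.smul_apply, smul_eq_mul, h0]
    ring
  have := key (α i).toNat
  rwa [hA', hB'] at this

lemma cancel_aux {a q d d' : F} (ha : a ≠ 0) (hq : q ≠ 0)
    (h : a * q * d' = a⁻¹ * q * d) : d = a ^ 2 * d' := by
  apply mul_left_cancel₀ (inv_ne_zero ha)
  apply mul_left_cancel₀ hq
  have e : q * (a⁻¹ * (a ^ 2 * d')) = (a⁻¹ * a) * (a * q * d') := by ring
  rw [e, inv_mul_cancel₀ ha, one_mul, h]
  ring

end Aux

/-- If K : V_{l,x} → V^*_{l,x⁻¹} intertwines e_i, f_i, k_i^{±1} for all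
i ∈ I_•, then K v_α = c_α v^*_{σ^{(ε)}(α)} for scalars c_α, and
c_α = x^{2δ_{i,0}} c_{α+e_i-e_{i+1}} whenever both indices lie in B_l. -/
theorem statement5 (n l : ℕ) [NeZero n] (hn : 2 ≤ n) (hl : 1 ≤ l) (x : F) (hx : x ≠ 0)
    (ε : ℕ) (hε : ε = 0 ∨ ε = 1) (K : V n l →ₗ[F] V n l)
    (hbullet : ∀ i : Zn n, i.val % 2 ≠ ε →
        K ∘ₗ eOp n l x i = eSOp n l x⁻¹ i ∘ₗ K
      ∧ K ∘ₗ fOp n l x i = fSOp n l x⁻¹ i ∘ₗ K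
      ∧ K ∘ₗ kOp n l i = kSOp n l i ∘ₗ K
      ∧ K ∘ₗ kInvOp n l i = kSInvOp n l i ∘ₗ K) :
    ∃ c : (Zn n → ℤ) → F,
      (∀ α : Zn n → ℤ, inB n l α → K (vB n l α) = c α • vB n l (sigmaAct n ε α))
    ∧ (∀ i : Zn n, i.val % 2 ≠ ε → ∀ α : Zn n → ℤ, inB n l α →
        inB n l (α + eu n i - eu n (i + 1)) →
        c α = (if i = 0 then x ^ 2 else 1) * c (α + eu n i - eu n (i + 1))) := by
  classical
  refine ⟨fun α => dcoef n l K α (sigmaAct n ε α), ?_, ?_⟩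
  · -- Part 1
    intro α hα
    show K (vB n l α) = dcoef n l K α (sigmaAct n ε α) • vB n l (sigmaAct n ε α)
    apply Finsupp.ext
    rintro ⟨β, hβ⟩
    rw [Finsupp.smul_apply, vB_apply' n l _ _ hβ, smul_eq_mul]
    by_cases hβσ : sigmaAct n ε α = β
    · rw [if_pos hβσ, mul_one]
      subst hβσ
      rw [dcoef_eq n l K α _ hβ]
    · rw [if_neg hβσ, mul_zero]
      by_contra hne0
      have hd0 : dcoef n l K α β ≠ 0 := by
        rw [dcoef_eq n l K α β hβ]; exact hne0
      have hw : ∀ i : Zn n, i.val % 2 ≠ ε → β (i+1) - β i = α i - α (i+1) := by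
        intro i hi
        by_contra hwne
        exact hd0 (relK' n l K i (hbullet i hi).2.2.1 α β hα hβ hwne)
      obtain ⟨i, hib, hmm⟩ : ∃ i : Zn n, i.val % 2 ≠ ε ∧ β i ≠ α (i+1) := by
        have hex : ∃ j, sigmaAct n ε α j ≠ β j := by
          by_contra hc'
          push_neg at hc'
          exact hβσ (funext hc')
        obtain ⟨j, hj⟩ := hex
        by_cases hpar : (j - (ε : Zn n)).val % 2 = 1
        · refine ⟨j, (bullet_iff n hε j).mpr hpar, ?_⟩
          have hsp : sigmaAct n ε α j = α (j + 1) := by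
            show α (sigmaPerm n ε j) = _
            rw [sp_bullet hpar]
          rw [hsp] at hj
          exact fun hcc => hj hcc.symm
        · have h0 := succ_parity n ε (j - 1)
          rw [sub_add_cancel] at h0
          have hb1 : (j - 1 - (ε : Zn n)).val % 2 < 2 := Nat.mod_lt _ two_pos
          have hb2 : (j - (ε : Zn n)).val % 2 < 2 := Nat.mod_lt _ two_pos
          have h1 : (j - 1 - (ε : Zn n)).val % 2 = 1 := by omega
          have hjb : (j - 1).val % 2 ≠ ε := (bullet_iff n hε (j-1)).mpr h1
          refine ⟨j - 1, hjb, ?_⟩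
          have hj1 : j - 1 + 1 = j := by ring
          rw [hj1]
          intro hcon
          have hweq := hw (j-1) hjb
          rw [hj1] at hweq
          have hsp : sigmaAct n ε α j = α (j - 1) := by
            show α (sigmaPerm n ε j) = _
            rw [sigmaPerm, if_neg hpar]
          rw [hsp] at hj
          exact hj (by omega)
      exact hd0 (keyvanish n l x hx K i (hbullet i hib).1 (hbullet i hib).2.1 α β hα hβ
        (hw i hib) hmm)
  · -- Part 2
    intro i hi α hα hα'
    show dcoef n l K α (sigmaAct n ε α)
      = (if i = 0 then x ^ 2 else 1)
        * dcoef n l K (α + eu n i - eu n (i+1)) (sigmaAct n ε (α + eu n i - eu n (i+1)))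
    have hb : (i - (ε : Zn n)).val % 2 = 1 := (bullet_iff n hε i).mp hi
    have hσα' : inB n l (sigmaAct n ε (α + eu n i - eu n (i+1))) := inB_sigma n l ε hα'
    have h := relE' n l x K i (hbullet i hi).1 α
      (sigmaAct n ε (α + eu n i - eu n (i+1))) hα hσα'
    have e1 : sigmaAct n ε (α + eu n i - eu n (i+1)) + eu n i - eu n (i+1)
        = sigmaAct n ε α := by
      rw [sigmaAct_sub, sigmaAct_add, sigmaAct_eu n hb, sigmaAct_eu1 n hb]
      abel
    have e2 : sigmaAct n ε (α + eu n i - eu n (i+1)) i = α (i+1) - 1 := by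
      rw [sigmaAct_sub, sigmaAct_add, sigmaAct_eu n hb, sigmaAct_eu1 n hb]
      have hsp : sigmaAct n ε α i = α (i + 1) := by
        show α (sigmaPerm n ε i) = _
        rw [sp_bullet hb]
      simp only [Pi.add_apply, Pi.sub_apply, eu_self' n i,
        eu_ne' n (self_ne_succ' n i), hsp]
      ring
    rw [e1, e2] at h
    have e3 : qint (α (i+1) - 1 + 1) = qint (α (i+1)) := by norm_num
    rw [e3] at h
    have hq : qint (α (i+1)) ≠ 0 := by
      apply qint_ne_zero'
      have := hα'.1 (i+1)
      rw [apply_shift_i1] at this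
      omega
    by_cases h0 : i = 0
    · rw [if_pos h0, if_pos h0] at h
      rw [if_pos h0]
      exact cancel_aux hx hq h
    · rw [if_neg h0, if_neg h0] at h
      rw [if_neg h0]
      have h2 : qint (α (i+1)) * dcoef n l K (α + eu n i - eu n (i+1))
          (sigmaAct n ε (α + eu n i - eu n (i+1)))
          = qint (α (i+1)) * dcoef n l K α (sigmaAct n ε α) := by
        linear_combination h
      rw [one_mul]
      exact (mul_left_cancel₀ hq h2).symm


end AII
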